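/- Let D₁ and D₂ be derivations of the Lie algebra rh₃ = h₃ × ℝ such that D₁ and D₂ commute (D₁ ∘ D₂ = D₂ ∘ D₁), both D₁ and D₂ are semisimple as endomorphisms of the underlying 4-dimensional real vector space, and both have characteristic polynomial X³(X − 1). Then D₁ = D₂. -/

import Mathlib

set_option linter.unusedTactic false
set_option linter.unnecessarySeqFocus false
set_option linter.unreachableTactic false

open Polynomial

/-- The 3-dimensional Heisenberg Lie algebra `h₃`: the real vector space `Fin 3 → ℝ`
with basis `e₁, e₂, e₃` and only nonzero bracket `⁅e₁, e₂⁆ = e₃`. -/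
def H3 : Type := Fin 3 → ℝ

noncomputable instance : AddCommGroup H3 := Pi.addCommGroup
noncomputable instance : Module ℝ H3 := Pi.module _ _ _
instance : FiniteDimensional ℝ H3 := inferInstanceAs (FiniteDimensional ℝ (Fin 3 → ℝ))

lemma H3.add_apply (x y : H3) (i : Fin 3) : (x + y) i = x i + y i := rfl
lemma H3.smul_apply (r : ℝ) (x : H3) (i : Fin 3) : (r • x) i = r * x i := rfl

noncomputable instance : LieRing H3 :=
  { (inferInstance : AddCommGroup H3) with
    bracket := fun x y => ![0, 0, x 0 * y 1 - x 1 * y 0]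
    add_lie := by
      intro x y z
      show (![_,_,_] : Fin 3 → ℝ) = ![_,_,_] + ![_,_,_]
      funext i
      fin_cases i <;> simp [H3.add_apply] <;> erw [H3.add_apply] <;> simp <;> ring
    lie_add := by
      intro x y z
      show (![_,_,_] : Fin 3 → ℝ) = ![_,_,_] + ![_,_,_]
      funext i
      fin_cases i <;> simp [H3.add_apply] <;> erw [H3.add_apply] <;> simp <;> ring
    lie_self := by
      intro x
      show (![_,_,_] : Fin 3 → ℝ) = 0
      funext i
      fin_cases i <;> simp <;> ring
    leibniz_lie := by
      intro x y z
      show (![_,_,_] : Fin 3 → ℝ) = ![_,_,_] + ![_,_,_]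
      funext i
      fin_cases i <;> simp [H3.add_apply] <;> erw [H3.add_apply] <;> simp <;> ring }

noncomputable instance : LieAlgebra ℝ H3 :=
  { lie_smul := by
      intro r x y
      show (![_,_,_] : Fin 3 → ℝ) = r • ![_,_,_]
      funext i
      fin_cases i <;> simp [H3.smul_apply] <;> erw [H3.smul_apply] <;> simp <;> ring }

/-- `rh₃ := h₃ × ℝ`, the product Lie algebra of the Heisenberg Lie algebra `h₃` with the
1-dimensional abelian Lie algebra `ℝ`. -/
def RH3 : Type := H3 × ℝ

noncomputable instance : AddCommGroup RH3 := inferInstanceAs (AddCommGroup (H3 × ℝ))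
noncomputable instance : Module ℝ RH3 := inferInstanceAs (Module ℝ (H3 × ℝ))
instance : FiniteDimensional ℝ RH3 := inferInstanceAs (FiniteDimensional ℝ (H3 × ℝ))

noncomputable instance : LieRing RH3 :=
  { (inferInstance : AddCommGroup RH3) with
    bracket := fun x y => (⁅x.1, y.1⁆, 0)
    add_lie := by
      intro x y z
      show (⁅x.1 + y.1, z.1⁆, (0:ℝ)) = (⁅x.1, z.1⁆ + ⁅y.1, z.1⁆, 0 + 0)
      simp [add_lie]
    lie_add := by
      intro x y z
      show (⁅x.1, y.1 + z.1⁆, (0:ℝ)) = (⁅x.1, y.1⁆ + ⁅x.1, z.1⁆, 0 + 0)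
      simp [lie_add]
    lie_self := by
      intro x
      show (⁅x.1, x.1⁆, (0:ℝ)) = (0, 0)
      simp
    leibniz_lie := by
      intro x y z
      show (⁅x.1, ⁅y.1, z.1⁆⁆, (0:ℝ)) = (⁅⁅x.1, y.1⁆, z.1⁆ + ⁅y.1, ⁅x.1, z.1⁆⁆, 0 + 0)
      rw [← leibniz_lie]
      simp }

noncomputable instance : LieAlgebra ℝ RH3 :=
  { lie_smul := by
      intro r x y
      show (⁅x.1, r • y.1⁆, (0:ℝ)) = (r • ⁅x.1, y.1⁆, r • (0:ℝ))
      simp }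

noncomputable def eqRH3 : RH3 ≃ₗ[ℝ] (Fin 4 → ℝ) where
  toFun x := ![x.1 0, x.1 1, x.1 2, x.2]
  invFun v := (![v 0, v 1, v 2], v 3)
  map_add' x y := by funext i; fin_cases i <;> rfl
  map_smul' r x := by funext i; fin_cases i <;> rfl
  left_inv x := by
    refine Prod.ext ?_ rfl
    funext i; fin_cases i <;> rfl
  right_inv v := by funext i; fin_cases i <;> rfl

noncomputable def bRH3 : Module.Basis (Fin 4) ℝ RH3 := Module.Basis.ofEquivFun eqRH3

noncomputable def E1 : RH3 := ((![1,0,0] : H3), (0:ℝ))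
noncomputable def E2 : RH3 := ((![0,1,0] : H3), (0:ℝ))
noncomputable def E3 : RH3 := ((![0,0,1] : H3), (0:ℝ))
noncomputable def E4 : RH3 := ((![0,0,0] : H3), (1:ℝ))

lemma bRH3_apply_0 : bRH3 0 = E1 := by
  rw [bRH3, Module.Basis.coe_ofEquivFun, E1]
  refine Prod.ext ?_ ?_ <;> simp [eqRH3] <;> rfl

lemma bRH3_apply_1 : bRH3 1 = E2 := by
  rw [bRH3, Module.Basis.coe_ofEquivFun, E2]
  refine Prod.ext ?_ ?_ <;> simp [eqRH3] <;> rfl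

lemma bRH3_apply_2 : bRH3 2 = E3 := by
  rw [bRH3, Module.Basis.coe_ofEquivFun, E3]
  refine Prod.ext ?_ ?_ <;> simp [eqRH3] <;> rfl

lemma bRH3_apply_3 : bRH3 3 = E4 := by
  rw [bRH3, Module.Basis.coe_ofEquivFun, E4]
  refine Prod.ext ?_ ?_ <;> simp [eqRH3] <;> rfl

lemma RH3.lie_def (x y : RH3) :
    ⁅x, y⁆ = ((![0, 0, x.1 0 * y.1 1 - x.1 1 * y.1 0] : H3), (0:ℝ)) := rfl

lemma RH3.fst_add (x y : RH3) (i : Fin 3) : (x + y).1 i = x.1 i + y.1 i := rfl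
lemma RH3.snd_add (x y : RH3) : (x + y).2 = x.2 + y.2 := rfl
lemma RH3.fst_smul (r : ℝ) (x : RH3) (i : Fin 3) : (r • x).1 i = r * x.1 i := rfl
lemma RH3.snd_smul (r : ℝ) (x : RH3) : (r • x).2 = r * x.2 := rfl

lemma RH3.ext_iff' (x y : RH3) :
    x = y ↔ x.1 0 = y.1 0 ∧ x.1 1 = y.1 1 ∧ x.1 2 = y.1 2 ∧ x.2 = y.2 := by
  constructor
  · rintro rfl; exact ⟨rfl, rfl, rfl, rfl⟩
  · rintro ⟨h0, h1, h2, h3⟩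
    refine Prod.ext ?_ h3
    funext i
    fin_cases i <;> assumption

lemma RH3.decomp (x : RH3) :
    x = x.1 0 • E1 + x.1 1 • E2 + x.1 2 • E3 + x.2 • E4 := by
  rw [RH3.ext_iff']
  refine ⟨?_, ?_, ?_, ?_⟩ <;>
    simp only [RH3.fst_add, RH3.snd_add, RH3.fst_smul, RH3.snd_smul] <;> simp [E1, E2, E3, E4]

lemma E1_fst_0 : E1.1 0 = 1 := rfl
lemma E1_fst_1 : E1.1 1 = 0 := rfl
lemma E1_fst_2 : E1.1 2 = 0 := rfl
lemma E1_snd : E1.2 = 0 := rfl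
lemma E2_fst_0 : E2.1 0 = 0 := rfl
lemma E2_fst_1 : E2.1 1 = 1 := rfl
lemma E2_fst_2 : E2.1 2 = 0 := rfl
lemma E2_snd : E2.2 = 0 := rfl
lemma E3_fst_0 : E3.1 0 = 0 := rfl
lemma E3_fst_1 : E3.1 1 = 0 := rfl
lemma E3_fst_2 : E3.1 2 = 1 := rfl
lemma E3_snd : E3.2 = 0 := rfl
lemma E4_fst_0 : E4.1 0 = 0 := rfl
lemma E4_fst_1 : E4.1 1 = 0 := rfl
lemma E4_fst_2 : E4.1 2 = 0 := rfl
lemma E4_snd : E4.2 = 1 := rfl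

lemma RH3.fst_zero (i : Fin 3) : (0 : RH3).1 i = 0 := rfl
lemma RH3.snd_zero : (0 : RH3).2 = 0 := rfl

noncomputable def Vt (t : ℝ) : RH3 := ((![0,0,t] : H3), (1:ℝ))

lemma V_fst_0 (t : ℝ) : (Vt t).1 0 = 0 := rfl
lemma V_fst_1 (t : ℝ) : (Vt t).1 1 = 0 := rfl
lemma V_fst_2 (t : ℝ) : (Vt t).1 2 = t := rfl
lemma V_snd (t : ℝ) : (Vt t).2 = 1 := rfl
lemma deriv_idem (D : LieDerivation ℝ RH3 RH3)
    (hss : Module.End.IsSemisimple (D.toLinearMap : Module.End ℝ RH3))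
    (hc : LinearMap.charpoly D.toLinearMap = X ^ 3 * (X - 1)) :
    ∀ x : RH3, D (D x) = D x := by
  set f : Module.End ℝ RH3 := D.toLinearMap with hf
  have hsq : Squarefree (minpoly ℝ f) := hss.minpoly_squarefree
  have hdvd : minpoly ℝ f ∣ (X * (X - 1)) ^ 3 := by
    refine dvd_trans (LinearMap.minpoly_dvd_charpoly f) ?_
    rw [hc, mul_pow]
    exact mul_dvd_mul_left _ (dvd_pow_self _ three_ne_zero)
  have h1 : minpoly ℝ f ∣ X * (X - 1) := (hsq.dvd_pow_iff_dvd (by norm_num)).mp hdvd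
  have h2 : aeval f (X * (X - 1) : ℝ[X]) = 0 := by
    obtain ⟨k, hk⟩ := h1
    rw [hk, map_mul, minpoly.aeval, zero_mul]
  have h3 : f * (f - 1) = 0 := by simpa using h2
  intro x
  have h4 := LinearMap.ext_iff.mp h3 x
  simp only [Module.End.mul_apply, LinearMap.sub_apply, Module.End.one_apply, map_sub,
    LinearMap.zero_apply] at h4
  have h5 : f (f x) = f x := by linear_combination (norm := module) h4
  exact h5
lemma deriv_trace (D : LieDerivation ℝ RH3 RH3)
    (hc : LinearMap.charpoly D.toLinearMap = X ^ 3 * (X - 1)) :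
    (D E1).1 0 + (D E2).1 1 + (D E3).1 2 + (D E4).2 = 1 := by
  set f : RH3 →ₗ[ℝ] RH3 := D.toLinearMap with hf
  set M := LinearMap.toMatrix bRH3 bRH3 f with hM
  have h1 : M.charpoly = X ^ 3 * (X - 1) := by
    rw [hM, LinearMap.charpoly_toMatrix]; exact hc
  have h2 : M.trace = 1 := by
    rw [Matrix.trace_eq_neg_charpoly_coeff, h1]
    have : (Fintype.card (Fin 4) - 1) = 3 := by simp
    rw [this]
    simp [mul_sub, ← pow_succ, coeff_X_pow]
  have h3 : M.trace = M 0 0 + M 1 1 + M 2 2 + M 3 3 := by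
    rw [Matrix.trace, Fin.sum_univ_four]; rfl
  have h4 : ∀ i, M i i = eqRH3 (f (bRH3 i)) i := by
    intro i
    rw [hM, LinearMap.toMatrix_apply, bRH3, Module.Basis.ofEquivFun_repr_apply]
  rw [h3, h4 0, h4 1, h4 2, h4 3, bRH3_apply_0, bRH3_apply_1, bRH3_apply_2, bRH3_apply_3] at h2
  have hfD : ∀ x, f x = D x := fun x => rfl
  simp only [hfD] at h2
  exact h2
set_option maxHeartbeats 2000000 in
lemma deriv_structure (D : LieDerivation ℝ RH3 RH3)
    (hss : Module.End.IsSemisimple (D.toLinearMap : Module.End ℝ RH3))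
    (hc : LinearMap.charpoly D.toLinearMap = X ^ 3 * (X - 1)) :
    ∃ q s t : ℝ, ∀ x : RH3,
      D x = (q * x.1 0 + s * x.1 1 + x.2) • (Vt t) := by
  have hidem := deriv_idem D hss hc
  have htr := deriv_trace D hc
  have key : ∀ y : RH3, D y = y.1 0 • D E1 + y.1 1 • D E2 + y.1 2 • D E3 + y.2 • D E4 := by
    intro y
    conv_lhs => rw [RH3.decomp y]
    simp [map_add, map_smul]
  -- D E3 from Leibniz on ⁅E1, E2⁆ = E3
  have hbr : ⁅E1, E2⁆ = E3 := by
    rw [RH3.ext_iff', RH3.lie_def]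
    norm_num [E1_fst_0, E1_fst_1, E2_fst_0, E2_fst_1, E3_fst_0, E3_fst_1, E3_fst_2, E3_snd,
      Matrix.cons_val_two, Matrix.tail_cons, Matrix.head_cons]
  have hDE3 := D.apply_lie_eq_add E1 E2
  rw [hbr, RH3.ext_iff'] at hDE3
  simp only [RH3.fst_add, RH3.snd_add] at hDE3
  rw [RH3.lie_def, RH3.lie_def] at hDE3
  simp only [RH3.fst_add, RH3.snd_add, E1_fst_0, E1_fst_1, E2_fst_0, E2_fst_1,
    Matrix.cons_val_zero, Matrix.cons_val_one, Matrix.head_cons, Matrix.cons_val_two,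
    Matrix.tail_cons] at hDE3
  obtain ⟨h30, h31, h32, h3s⟩ := hDE3
  -- centrality of E4 : from ⁅E4, E1⁆ and ⁅E4, E2⁆
  have hz1 : ⁅E4, E1⁆ = (0 : RH3) := by
    rw [RH3.ext_iff', RH3.lie_def]
    norm_num [E4_fst_0, E4_fst_1, E1_fst_0, E1_fst_1, RH3.fst_zero, RH3.snd_zero,
      Matrix.cons_val_two, Matrix.tail_cons, Matrix.head_cons]
  have hz2 : ⁅E4, E2⁆ = (0 : RH3) := by
    rw [RH3.ext_iff', RH3.lie_def]
    norm_num [E4_fst_0, E4_fst_1, E2_fst_0, E2_fst_1, RH3.fst_zero, RH3.snd_zero,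
      Matrix.cons_val_two, Matrix.tail_cons, Matrix.head_cons]
  have h41w := D.apply_lie_eq_add E4 E1
  rw [hz1, map_zero, RH3.ext_iff'] at h41w
  simp only [RH3.fst_add, RH3.snd_add] at h41w
  rw [RH3.lie_def, RH3.lie_def] at h41w
  simp only [RH3.fst_add, RH3.snd_add, E4_fst_0, E4_fst_1, E1_fst_0, E1_fst_1,
    Matrix.cons_val_zero, Matrix.cons_val_one, Matrix.head_cons, Matrix.cons_val_two,
    Matrix.tail_cons, RH3.fst_zero, RH3.snd_zero] at h41w
  have h40w := D.apply_lie_eq_add E4 E2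
  rw [hz2, map_zero, RH3.ext_iff'] at h40w
  simp only [RH3.fst_add, RH3.snd_add] at h40w
  rw [RH3.lie_def, RH3.lie_def] at h40w
  simp only [RH3.fst_add, RH3.snd_add, E4_fst_0, E4_fst_1, E2_fst_0, E2_fst_1,
    Matrix.cons_val_zero, Matrix.cons_val_one, Matrix.head_cons, Matrix.cons_val_two,
    Matrix.tail_cons, RH3.fst_zero, RH3.snd_zero] at h40w
  have h41 : (D E4).1 1 = 0 := by
    have := h41w.2.2.1
    linarith
  have h40 : (D E4).1 0 = 0 := by
    have := h40w.2.2.1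
    linarith
  norm_num at h30 h31 h3s
  have h32' : (D E3).1 2 = (D E1).1 0 + (D E2).1 1 := by linarith [h32]
  clear h32 h41w h40w hz1 hz2 hbr
  have comp : ∀ (y : RH3) (i : Fin 3), (D y).1 i
      = y.1 0 * (D E1).1 i + y.1 1 * (D E2).1 i + y.1 2 * (D E3).1 i + y.2 * (D E4).1 i := by
    intro y i
    rw [key y]
    simp [RH3.fst_add, RH3.fst_smul]
  have comp2 : ∀ (y : RH3), (D y).2
      = y.1 0 * (D E1).2 + y.1 1 * (D E2).2 + y.1 2 * (D E3).2 + y.2 * (D E4).2 := by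
    intro y
    rw [key y]
    simp [RH3.snd_add, RH3.snd_smul]
  have I1 := hidem E1
  have I2 := hidem E2
  have I3 := hidem E3
  have I4 := hidem E4
  have A1 := comp (D E1) 0; rw [I1] at A1
  have A2 := comp (D E1) 1; rw [I1] at A2
  have A3 := comp (D E1) 2; rw [I1] at A3
  have A4 := comp2 (D E1); rw [I1] at A4
  have B1 := comp (D E2) 0; rw [I2] at B1
  have B2 := comp (D E2) 1; rw [I2] at B2
  have B3 := comp (D E2) 2; rw [I2] at B3
  have B4 := comp2 (D E2); rw [I2] at B4
  have C3 := comp (D E3) 2; rw [I3] at C3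
  have D4 := comp2 (D E4); rw [I4] at D4
  set a := (D E1).1 0 with ha'
  set b := (D E1).1 1 with hb'
  set p := (D E1).1 2 with hp'
  set q := (D E1).2 with hq'
  set c := (D E2).1 0 with hc'
  set d := (D E2).1 1 with hd'
  set r := (D E2).1 2 with hr'
  set s := (D E2).2 with hs'
  set t := (D E4).1 2 with ht'
  set u := (D E4).2 with hu'
  clear_value a b p q c d r s t u
  rw [h30, h40] at A1 B1
  rw [h31, h41] at A2 B2
  rw [h32'] at A3 B3 C3 htr
  rw [h3s] at A4 B4 D4
  rw [h30, h31] at C3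
  rw [h40, h41] at D4
  -- now pure algebra
  have had : a + d = 0 := by
    have hC : (a + d) * ((a + d) - 1) = 0 := by nlinarith [C3]
    have hD : u * (u - 1) = 0 := by nlinarith [D4]
    rcases mul_eq_zero.mp hC with h | h <;> rcases mul_eq_zero.mp hD with h' | h' <;>
      linarith
  have hu1 : u = 1 := by
    have hC : (a + d) * ((a + d) - 1) = 0 := by nlinarith [C3]
    have hD : u * (u - 1) = 0 := by nlinarith [D4]
    rcases mul_eq_zero.mp hC with h | h <;> rcases mul_eq_zero.mp hD with h' | h' <;>
      linarith
  have hb : b = 0 := by linear_combination A2 + b * had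
  have hc0 : c = 0 := by linear_combination B1 + c * had
  have ha : a = 0 := by
    linear_combination (1/2) * A1 - (1/2) * B2 + ((1 + a - d)/2) * had
  have hd : d = 0 := by linarith
  have hp : p = q * t := by
    linear_combination A3 + p * had + p * ha + r * hb
  have hr : r = s * t := by
    linear_combination B3 + r * had + r * hd + p * hc0
  refine ⟨q, s, t, ?_⟩
  intro x
  rw [RH3.ext_iff']
  refine ⟨?_, ?_, ?_, ?_⟩
  · rw [comp x 0, RH3.fst_smul, h30, h40]
    simp only [V_fst_0, Matrix.cons_val_zero, ← ha', ← hc']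
    linear_combination x.1 0 * ha + x.1 1 * hc0
  · rw [comp x 1, RH3.fst_smul, h31, h41]
    simp only [V_fst_1, Matrix.cons_val_one, Matrix.head_cons, ← hb', ← hd']
    linear_combination x.1 0 * hb + x.1 1 * hd
  · rw [comp x 2, RH3.fst_smul, h32']
    simp only [V_fst_2, Matrix.cons_val_two, Matrix.tail_cons, Matrix.head_cons, ← hp', ← hr', ← ht']
    linear_combination x.1 0 * hp + x.1 1 * hr + x.1 2 * had
  · rw [comp2 x, RH3.snd_smul, h3s]
    simp only [V_snd]
    linear_combination x.2 * hu1
/-- If `D₁` and `D₂` are commuting derivations of `rh₃ = h₃ × ℝ`, both semisimple as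
endomorphisms of the underlying 4-dimensional real vector space, and both with
characteristic polynomial `X³ * (X - 1)`, then `D₁ = D₂`. -/
theorem derivation_rh3_semisimple_unique (D₁ D₂ : LieDerivation ℝ RH3 RH3)
    (hcomm : D₁.toLinearMap ∘ₗ D₂.toLinearMap = D₂.toLinearMap ∘ₗ D₁.toLinearMap)
    (hss₁ : Module.End.IsSemisimple (D₁.toLinearMap : Module.End ℝ RH3))
    (hss₂ : Module.End.IsSemisimple (D₂.toLinearMap : Module.End ℝ RH3))
    (hc₁ : LinearMap.charpoly D₁.toLinearMap = X ^ 3 * (X - 1))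
    (hc₂ : LinearMap.charpoly D₂.toLinearMap = X ^ 3 * (X - 1)) :
    D₁ = D₂ := by
  obtain ⟨q₁, s₁, t₁, h₁⟩ := deriv_structure D₁ hss₁ hc₁
  obtain ⟨q₂, s₂, t₂, h₂⟩ := deriv_structure D₂ hss₂ hc₂
  have key : ∀ y : RH3, D₁ (D₂ y) = D₂ (D₁ y) := fun y => by
    simpa using LinearMap.congr_fun hcomm y
  -- values on E4
  have hD1E4 : D₁ E4 = (Vt t₁) := by
    rw [h₁ E4]
    have hsc : q₁ * E4.1 0 + s₁ * E4.1 1 + E4.2 = 1 := by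
      rw [E4_fst_0, E4_fst_1, E4_snd]; ring
    rw [hsc, one_smul]
  have hD2E4 : D₂ E4 = (Vt t₂) := by
    rw [h₂ E4]
    have hsc : q₂ * E4.1 0 + s₂ * E4.1 1 + E4.2 = 1 := by
      rw [E4_fst_0, E4_fst_1, E4_snd]; ring
    rw [hsc, one_smul]
  -- values on the vectors V
  have hD1V2 : D₁ (Vt t₂) = (Vt t₁) := by
    rw [h₁]
    have hsc : q₁ * (Vt t₂).1 0 + s₁ * (Vt t₂).1 1
        + (Vt t₂).2 = 1 := by
      rw [V_fst_0, V_fst_1, V_snd]; ring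
    rw [hsc, one_smul]
  have hD2V1 : D₂ (Vt t₁) = (Vt t₂) := by
    rw [h₂]
    have hsc : q₂ * (Vt t₁).1 0 + s₂ * (Vt t₁).1 1
        + (Vt t₁).2 = 1 := by
      rw [V_fst_0, V_fst_1, V_snd]; ring
    rw [hsc, one_smul]
  have hVV : ((Vt t₁) : RH3) = (Vt t₂) := by
    have k := key E4
    rw [hD2E4, hD1E4, hD1V2, hD2V1] at k
    exact k
  have htt : t₁ = t₂ := by
    have := congrArg (fun z : RH3 => z.1 2) hVV
    simpa [V_fst_2] using this
  -- values on E1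
  have hD1E1 : D₁ E1 = q₁ • (Vt t₁) := by
    rw [h₁ E1]
    congr 1
    rw [E1_fst_0, E1_fst_1, E1_snd]; ring
  have hD2E1 : D₂ E1 = q₂ • (Vt t₂) := by
    rw [h₂ E1]
    congr 1
    rw [E1_fst_0, E1_fst_1, E1_snd]; ring
  have k1 := key E1
  rw [hD2E1, map_smul, hD1V2, hD1E1, map_smul, hD2V1] at k1
  have hqq : q₁ = q₂ := by
    have := congrArg (fun z : RH3 => z.2) k1
    simp only [RH3.snd_smul, V_snd] at this
    linarith
  -- values on E2
  have hD1E2 : D₁ E2 = s₁ • (Vt t₁) := by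
    rw [h₁ E2]
    congr 1
    rw [E2_fst_0, E2_fst_1, E2_snd]; ring
  have hD2E2 : D₂ E2 = s₂ • (Vt t₂) := by
    rw [h₂ E2]
    congr 1
    rw [E2_fst_0, E2_fst_1, E2_snd]; ring
  have k2 := key E2
  rw [hD2E2, map_smul, hD1V2, hD1E2, map_smul, hD2V1] at k2
  have hss' : s₁ = s₂ := by
    have := congrArg (fun z : RH3 => z.2) k2
    simp only [RH3.snd_smul, V_snd] at this
    linarith
  ext x
  rw [h₁ x, h₂ x, htt, hqq, hss']
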